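/- (Remark 7.7, case b = 1.) Let p > 3 be a prime, let k be an even integer, and let h > 0 be a real number with (⌈(p−3)h⌉ − 1)/(p−1) ≥ 1. Then there exists an (automatically even) integer k' such that: (a) k' ≡ k (mod (p−1)·p^{⌊m_p^{(1)}(h)⌋}); (b) k'−1 ≢ 0 (mod p+1); and (c) ⌊(k'−2)/(p−1)⌋ < h < (k'−2)/2. -/
import Mathlib


/-- `m_p^{(1)}(h) = log_p((⌈(p−3)h⌉ − 1)/(p−1))` if `(⌈(p−3)h⌉ − 1)/(p−1) ≥ 1`,
and `0` otherwise. -/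
noncomputable def mp1 (p : ℕ) (h : ℝ) : ℝ :=
  if 1 ≤ ((⌈((p : ℝ) - 3) * h⌉ : ℝ) - 1) / ((p : ℝ) - 1) then
    Real.logb p (((⌈((p : ℝ) - 3) * h⌉ : ℝ) - 1) / ((p : ℝ) - 1))
  else 0

/-- **Remark 7.7, case b = 1.** Let `p > 3` be prime, `k` an even integer, and
`h > 0` a real with `(⌈(p−3)h⌉ − 1)/(p−1) ≥ 1`. Then there is an integer `k'` with
(a) `k' ≡ k (mod (p−1)p^⌊m_p^{(1)}(h)⌋)`, (b) `k'−1 ≢ 0 (mod p+1)`, and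
(c) `⌊(k'−2)/(p−1)⌋ < h < (k'−2)/2`. -/
theorem exists_weight_with_deep_congruence_b1 (p : ℕ) (hp : p.Prime) (hp3 : 3 < p)
    (k : ℤ) (hk : Even k) (h : ℝ) (hh : 0 < h)
    (hstar : 1 ≤ ((⌈((p : ℝ) - 3) * h⌉ : ℝ) - 1) / ((p : ℝ) - 1)) :
    ∃ k' : ℤ,
      Int.ModEq (((p : ℤ) - 1) * (p : ℤ) ^ (⌊mp1 p h⌋.toNat)) k' k ∧
      ¬ Int.ModEq ((p : ℤ) + 1) (k' - 1) 0 ∧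
      ((⌊((k' : ℝ) - 2) / ((p : ℝ) - 1)⌋ : ℝ) < h ∧ h < ((k' : ℝ) - 2) / 2) := by
  have hp1 : (1:ℝ) < (p:ℝ) := by
    have : (3:ℝ) < (p:ℝ) := by exact_mod_cast hp3
    linarith
  set C : ℝ := ((⌈((p : ℝ) - 3) * h⌉ : ℝ) - 1) / ((p : ℝ) - 1) with hCdef
  have hCpos : 0 < C := lt_of_lt_of_le one_pos hstar
  have hm : mp1 p h = Real.logb p C := by rw [mp1, if_pos hstar]
  set m : ℕ := ⌊mp1 p h⌋.toNat with hmdef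
  have hlogb0 : 0 ≤ Real.logb p C := Real.logb_nonneg hp1 hstar
  have hfl : ((m : ℕ) : ℝ) ≤ Real.logb p C := by
    have h0 : (0:ℤ) ≤ ⌊Real.logb (p:ℝ) C⌋ := Int.floor_nonneg.mpr hlogb0
    have he : ((m : ℕ) : ℝ) = ((⌊Real.logb (p:ℝ) C⌋ : ℤ) : ℝ) := by
      rw [hmdef, hm]
      exact_mod_cast congrArg (fun z : ℤ => (z : ℝ)) (Int.toNat_of_nonneg h0)
    rw [he]
    exact Int.floor_le _
  have hpm : (p:ℝ)^m ≤ C := by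
    have h1 : (p:ℝ)^((m:ℕ):ℝ) ≤ (p:ℝ)^(Real.logb p C) :=
      Real.rpow_le_rpow_of_exponent_le hp1.le hfl
    rw [Real.rpow_logb (by positivity) (ne_of_gt hp1) hCpos, Real.rpow_natCast] at h1
    exact h1
  set M : ℤ := ((p : ℤ) - 1) * (p : ℤ) ^ m with hMdef
  have hMpos : 0 < M := by
    have hp3' : (3:ℤ) < (p:ℤ) := by exact_mod_cast hp3
    exact mul_pos (by omega) (pow_pos (by omega) m)
  have hMposR : (0:ℝ) < (M:ℝ) := by exact_mod_cast hMpos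
  have hMR : (M:ℝ) = ((p:ℝ) - 1) * (p:ℝ)^m := by push_cast [hMdef]; ring
  have hMle : (M:ℝ) < ((p:ℝ) - 3) * h := by
    have h2 : (M:ℝ) ≤ ((p:ℝ) - 1) * C := by
      rw [hMR]
      exact mul_le_mul_of_nonneg_left hpm (by linarith)
    have h3 : ((p:ℝ) - 1) * C = (⌈((p : ℝ) - 3) * h⌉ : ℝ) - 1 := by
      have hne : ((p:ℝ) - 1) ≠ 0 := by linarith
      rw [hCdef, mul_comm, div_mul_cancel₀ _ hne]
    have h4 : (⌈((p : ℝ) - 3) * h⌉ : ℝ) - 1 < ((p:ℝ) - 3) * h := by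
      have := Int.ceil_lt_add_one (((p : ℝ) - 3) * h)
      linarith
    linarith
  set t : ℝ := (2*h + 2 - (k:ℝ)) / (M:ℝ) with htdef
  set j : ℤ := ⌊t⌋ + 1 with hjdef
  refine ⟨k + M * j, ?_, ?_, ?_, ?_⟩
  · exact (Int.modEq_iff_dvd.mpr ⟨-j, by ring⟩)
  · -- parity
    have hpodd : Odd (p:ℤ) := by
      have := hp.odd_of_ne_two (by omega)
      exact_mod_cast this
    have hMeven : Even M := by
      rw [hMdef]
      exact (hpodd.sub_odd odd_one).mul_right _
    have hkeven : Even (k + M * j) := hk.add (hMeven.mul_right j)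
    intro hmod
    have hdvd : ((p:ℤ) + 1) ∣ (k + M * j - 1) := Int.modEq_zero_iff_dvd.mp hmod
    have h2p : (2:ℤ) ∣ ((p:ℤ) + 1) := hpodd.add_one.two_dvd
    have h2d : (2:ℤ) ∣ (k + M * j - 1) := h2p.trans hdvd
    rcases hkeven with ⟨c, hc⟩
    omega
  · -- lower bound part of (c): floor < h
    have hjt : (j:ℝ) ≤ t + 1 := by
      rw [hjdef]; push_cast
      have := Int.floor_le t
      linarith
    have hub : ((k:ℝ) + M * j) ≤ 2*h + 2 + M := by
      have : (M:ℝ) * j ≤ (M:ℝ) * (t + 1) := mul_le_mul_of_nonneg_left hjt hMposR.le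
      have ht : (M:ℝ) * t = 2*h + 2 - (k:ℝ) := by
        rw [htdef]; field_simp
      nlinarith
    have hub2 : ((k:ℝ) + M * j) - 2 < ((p:ℝ) - 1) * h := by
      push_cast at hub ⊢
      nlinarith
    have hfrac : (((k + M * j : ℤ) : ℝ) - 2) / ((p:ℝ) - 1) < h := by
      rw [div_lt_iff₀ (by linarith)]
      push_cast
      nlinarith
    calc ((⌊(((k + M * j : ℤ) : ℝ) - 2) / ((p:ℝ) - 1)⌋ : ℝ))
        ≤ (((k + M * j : ℤ) : ℝ) - 2) / ((p:ℝ) - 1) := Int.floor_le _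
      _ < h := hfrac
  · -- upper bound part of (c): h < (k'-2)/2
    have hjt : t < (j:ℝ) := by
      rw [hjdef]; push_cast
      exact Int.lt_floor_add_one t
    have hlb : 2*h + 2 < (k:ℝ) + M * j := by
      have : (M:ℝ) * t < (M:ℝ) * j := mul_lt_mul_of_pos_left hjt hMposR
      have ht : (M:ℝ) * t = 2*h + 2 - (k:ℝ) := by
        rw [htdef]; field_simp
      nlinarith
    rw [lt_div_iff₀ (by norm_num : (0:ℝ) < 2)]
    push_cast
    nlinarith
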